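/- Let P : ℕ → Prop be downward closed, i.e., for every k, P (k + 1) implies P k, and let s : ℕ → ℕ → Bool be such that for every i, the sequence s i semidecides P i. Then (∀ i : ℕ, P i) if and only if ω ^ 2 ≤ Ψ(s). -/

import Mathlib

/-- A Boolean sequence `b` semidecides a proposition `Q` if `Q ↔ ∃ j, b j = true`. -/
def Semidecides (b : ℕ → Bool) (Q : Prop) : Prop :=
  Q ↔ ∃ j, b j = true

open Classical in
/-- `tCount s n k` is the number of indices `i < n` such that `s i j = true` for some `j ≤ k`. -/
noncomputable def tCount (s : ℕ → ℕ → Bool) (n k : ℕ) : ℕ :=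
  ((Finset.range n).filter (fun i => ∃ j ≤ k, s i j = true)).card

/-- The `n`-th characteristic approximant `Ψₙ(s)`. -/
noncomputable def psiApprox (s : ℕ → ℕ → Bool) (n : ℕ) : Ordinal :=
  ⨆ k : ℕ, (Ordinal.omega0 * (tCount s n k) + k)

/-- The characteristic ordinal `Ψ(s)`. -/
noncomputable def psi (s : ℕ → ℕ → Bool) : Ordinal :=
  ⨆ n : ℕ, (psiApprox s n + n)

universe u

lemma aux_le_psiApprox (s : ℕ → ℕ → Bool) (n k : ℕ) :
    Ordinal.omega0.{u} * (tCount s n k : Ordinal.{u}) + (k : Ordinal.{u}) ≤ psiApprox.{u} s n := by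
  exact Ordinal.le_iSup (fun k : ℕ => Ordinal.omega0.{u} * (tCount s n k : Ordinal.{u}) + (k : Ordinal.{u})) k

lemma aux_le_psi (s : ℕ → ℕ → Bool) (n : ℕ) :
    psiApprox.{u} s n + (n : Ordinal.{u}) ≤ psi.{u} s := by
  exact Ordinal.le_iSup (fun m : ℕ => psiApprox.{u} s m + (m : Ordinal.{u})) n

theorem countable_meet_omega_sq (P : ℕ → Prop) (hP : ∀ k, P (k + 1) → P k)
    (s : ℕ → ℕ → Bool) (hs : ∀ i, Semidecides (s i) (P i)) :
    (∀ i : ℕ, P i) ↔ Ordinal.omega0 ^ 2 ≤ psi s := by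
  have homega : Ordinal.omega0 ^ 2 = Ordinal.omega0 * Ordinal.omega0 := sq _
  constructor
  · intro hall
    rw [homega]
    apply le_of_forall_lt
    intro α hα
    rw [Ordinal.lt_mul_iff_of_isSuccLimit Ordinal.isSuccLimit_omega0] at hα
    obtain ⟨c, hc, hαc⟩ := hα
    obtain ⟨n, rfl⟩ := Ordinal.lt_omega0.mp hc
    refine lt_of_lt_of_le hαc ?_
    -- find a common bound on witnesses
    have hK : ∀ n : ℕ, ∃ K, ∀ i < n, ∃ j ≤ K, s i j = true := by
      intro n
      induction n with
      | zero => exact ⟨0, fun i hi => absurd hi (Nat.not_lt_zero i)⟩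
      | succ n ih =>
        obtain ⟨K, hK⟩ := ih
        obtain ⟨j, hj⟩ := (hs n).mp (hall n)
        refine ⟨max K j, fun i hi => ?_⟩
        rcases Nat.lt_succ_iff_lt_or_eq.mp hi with h | h
        · obtain ⟨j', hj', hsj'⟩ := hK i h
          exact ⟨j', le_trans hj' (le_max_left _ _), hsj'⟩
        · subst h; exact ⟨j, le_max_right _ _, hj⟩
    obtain ⟨K, hK⟩ := hK n
    have ht : tCount s n K = n := by
      unfold tCount
      rw [Finset.filter_true_of_mem, Finset.card_range]
      intro i hi
      exact hK i (Finset.mem_range.mp hi)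
    refine le_trans ?_ (aux_le_psi s n)
    refine le_trans ?_ (le_self_add)
    refine le_trans ?_ (aux_le_psiApprox s n K)
    simp only [ht]
    exact le_self_add
  · intro hle i
    by_contra hPi
    rw [homega] at hle
    -- P fails at all indices ≥ i
    have hdown : ∀ j, P (i + j) → P i := by
      intro j
      induction j with
      | zero => exact id
      | succ j ih => intro h; exact ih (hP _ h)
    have hcount : ∀ n k, tCount s n k ≤ i := by
      intro n k
      have hsub : (Finset.range n).filter (fun x => ∃ j ≤ k, s x j = true)
          ⊆ Finset.range i := by
        intro x hx
        rw [Finset.mem_filter] at hx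
        obtain ⟨_, j, _, hsx⟩ := hx
        have hPx : P x := (hs x).mpr ⟨j, hsx⟩
        rw [Finset.mem_range]
        by_contra hxi
        push_neg at hxi
        exact hPi (hdown (x - i) (by rwa [Nat.add_sub_cancel' hxi]))
      calc tCount s n k ≤ (Finset.range i).card := Finset.card_le_card hsub
        _ = i := Finset.card_range i
    have key : psi s ≤ Ordinal.omega0 * (i : Ordinal) + Ordinal.omega0 + Ordinal.omega0 := by
      unfold psi psiApprox
      refine Ordinal.iSup_le fun n => ?_
      refine add_le_add ?_ (le_of_lt (Ordinal.nat_lt_omega0 n))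
      refine Ordinal.iSup_le fun k => ?_
      exact add_le_add (mul_le_mul_right (Nat.cast_le.mpr (hcount n k)) _)
        (le_of_lt (Ordinal.nat_lt_omega0 k))
    have heq : Ordinal.omega0 * (i : Ordinal) + Ordinal.omega0 + Ordinal.omega0
        = Ordinal.omega0 * ((i : Ordinal) + 2) := by
      have h2 : Ordinal.omega0 * 2 = Ordinal.omega0 + Ordinal.omega0 := by
        rw [show (2 : Ordinal) = 1 + 1 by norm_num, mul_add, mul_one]
      rw [mul_add, h2, add_assoc]
    have hlt : Ordinal.omega0 * ((i : Ordinal) + 2) < Ordinal.omega0 * Ordinal.omega0 := by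
      apply mul_lt_mul_of_pos_left _ Ordinal.omega0_pos
      have h : ((i : Ordinal) + 2) = ((i + 2 : ℕ) : Ordinal) := by push_cast; ring
      rw [h]
      exact Ordinal.nat_lt_omega0 _
    exact absurd (le_trans hle (heq ▸ key)) (not_le.mpr hlt)
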